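/- Let c ∈ ℝ \ {0}. For every integer l ≥ 0 one has the strict positivity 2 (d₁ d₂/(a+b)) · (a^{2l+3} − b^{2l+3}) · (a^{2l+2} − b^{2l+2}) + (d₁ a^{2l+2} + d₂ b^{2l+2})² > 0. -/

import Mathlib

noncomputable def aDP (t : ℝ) : ℝ := (3 + Real.sqrt 5) / (2 * t)
noncomputable def bDP (t : ℝ) : ℝ := (3 - Real.sqrt 5) / (2 * t)
noncomputable def d1DP (c : ℝ) : ℝ := -(3 + Real.sqrt 5) / (18 * c)
noncomputable def d2DP (c : ℝ) : ℝ := (-3 + Real.sqrt 5) / (18 * c)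

/-- For every `l ≥ 0`,
`2 (d₁d₂/(a+b)) (a^{2l+3} − b^{2l+3}) (a^{2l+2} − b^{2l+2})
  + (d₁ a^{2l+2} + d₂ b^{2l+2})² > 0`,
where `t` is the real cube root of `c ≠ 0`. -/
theorem stmt16 (c t : ℝ) (hc : c ≠ 0) (ht : t ^ 3 = c) (l : ℕ) :
    0 < 2 * (d1DP c * d2DP c / (aDP t + bDP t)) *
          (aDP t ^ (2 * l + 3) - bDP t ^ (2 * l + 3)) *
          (aDP t ^ (2 * l + 2) - bDP t ^ (2 * l + 2)) +
        (d1DP c * aDP t ^ (2 * l + 2) + d2DP c * bDP t ^ (2 * l + 2)) ^ 2 := by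
  have ht0 : t ≠ 0 := by
    intro h; apply hc; rw [← ht, h]; ring
  have hs2 : Real.sqrt 5 ^ 2 = 5 := Real.sq_sqrt (by norm_num)
  have hs0 : 0 < Real.sqrt 5 := Real.sqrt_pos.mpr (by norm_num)
  have hslt : Real.sqrt 5 < 3 := by nlinarith
  set s := Real.sqrt 5 with hsdef
  set A : ℝ := (3 + s) / 2 with hA
  set B : ℝ := (3 - s) / 2 with hB
  have hB0 : 0 < B := by rw [hB]; linarith
  have hBA : B < A := by rw [hA, hB]; linarith
  set m := 2 * l + 2 with hm
  have hm1 : 2 * l + 3 = m + 1 := rfl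
  have ha : aDP t = A / t := by rw [aDP, hA, div_div]
  have hb : bDP t = B / t := by rw [bDP, hB, div_div]
  have hdiff1 : aDP t ^ (m + 1) - bDP t ^ (m + 1) = (A ^ (m+1) - B ^ (m+1)) / t ^ (m+1) := by
    rw [ha, hb, div_pow, div_pow, div_pow, sub_div]
  have hdiff2 : aDP t ^ m - bDP t ^ m = (A ^ m - B ^ m) / t ^ m := by
    rw [ha, hb, div_pow, div_pow, div_pow, sub_div]
  have hcoef : d1DP c * d2DP c / (aDP t + bDP t) = t / (243 * c ^ 2) := by
    rw [d1DP, d2DP, aDP, bDP, ← hsdef]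
    field_simp
    linear_combination (-486) * hs2
  have hX : 0 < A ^ (m+1) - B ^ (m+1) := by
    have := pow_lt_pow_left₀ hBA hB0.le (n := m+1) (by omega)
    linarith
  have hY : 0 < A ^ m - B ^ m := by
    have := pow_lt_pow_left₀ hBA hB0.le (n := m) (by omega)
    linarith
  have hkey : 2 * (d1DP c * d2DP c / (aDP t + bDP t)) *
          (aDP t ^ (2 * l + 3) - bDP t ^ (2 * l + 3)) *
          (aDP t ^ (2 * l + 2) - bDP t ^ (2 * l + 2))
      = 2 * ((A ^ (m+1) - B ^ (m+1)) * (A ^ m - B ^ m)) / (243 * c ^ 2 * (t ^ m) ^ 2) := by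
    rw [hm1, hdiff1]
    show _ * (aDP t ^ m - bDP t ^ m) = _
    rw [hdiff2, hcoef, pow_succ]
    have h1 : t ^ m ≠ 0 := pow_ne_zero _ ht0
    field_simp
    ring
  rw [hkey]
  have hpos : 0 < 2 * ((A ^ (m+1) - B ^ (m+1)) * (A ^ m - B ^ m)) / (243 * c ^ 2 * (t ^ m) ^ 2) := by
    apply div_pos
    · positivity
    · have h1 : 0 < c ^ 2 := pow_two_pos_of_ne_zero hc
      have h2 : 0 < (t ^ m) ^ 2 := pow_two_pos_of_ne_zero (pow_ne_zero _ ht0)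
      positivity
  nlinarith [sq_nonneg (d1DP c * aDP t ^ (2 * l + 2) + d2DP c * bDP t ^ (2 * l + 2))]
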